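/- For any dissimilarity map δ on a finite set X with |X| = n ≥ 4 and any distinct i,j ∈ X, the Z-criterion Z_δ(i,j) = (1/C(n-1,2)) ∑_{{k,l} ⊆ X\{i,j}} w_δ(ij:kl) satisfies Z_δ(i,j) = -L_δ - Q_δ(i,j), where L_δ = (1/C(n-1,2)) ∑_{{x,y} ⊆ X} δ(x,y) does not depend on i or j. Consequently, a pair maximizes Z_δ if and only if it minimizes Q_δ. -/

import Mathlib

open Finset

/-- The neighbor-joining Q-criterion. -/
noncomputable def njQ {X : Type*} [Fintype X] [DecidableEq X]
    (δ : X → X → ℝ) (i j : X) : ℝ :=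
  δ i j - (1 / ((Fintype.card X : ℝ) - 2)) *
    ((∑ k ∈ Finset.univ.erase i, δ i k) + (∑ k ∈ Finset.univ.erase j, δ j k))

/-- `w_δ(ij:kl) = (1/2)(δ(i,k)+δ(i,l)+δ(j,k)+δ(j,l)) - δ(i,j) - δ(k,l)`. -/
noncomputable def njw {X : Type*} (δ : X → X → ℝ) (i j k l : X) : ℝ :=
  (δ i k + δ i l + δ j k + δ j l) / 2 - δ i j - δ k l

/-- The (unscaled) Z-criterion `Z_δ(i,j) = (1/C(n-1,2)) ∑_{{k,l} ⊆ X\{i,j}} w_δ(ij:kl)`,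
where the sum over unordered pairs is written as half the sum over ordered pairs. -/
noncomputable def njZu {X : Type*} [Fintype X] [DecidableEq X]
    (δ : X → X → ℝ) (i j : X) : ℝ :=
  (1 / ((Fintype.card X - 1).choose 2 : ℝ)) *
    ((1 / 2) * ∑ k ∈ (Finset.univ.erase i).erase j,
      ∑ l ∈ ((Finset.univ.erase i).erase j).erase k, njw δ i j k l)

/-- `L_δ = (1/C(n-1,2)) ∑_{{x,y} ⊆ X} δ(x,y)` (sum over unordered pairs). -/
noncomputable def njL {X : Type*} [Fintype X] [DecidableEq X]
    (δ : X → X → ℝ) : ℝ :=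
  (1 / ((Fintype.card X - 1).choose 2 : ℝ)) *
    ((1 / 2) * ∑ x : X, ∑ y ∈ Finset.univ.erase x, δ x y)

/-- `Z_δ(i,j) = -L_δ - Q_δ(i,j)` for all distinct `i,j`; consequently a pair
maximizes `Z_δ` iff it minimizes `Q_δ`. -/
theorem statement_2 {X : Type*} [Fintype X] [DecidableEq X]
    (hn : 4 ≤ Fintype.card X)
    (δ : X → X → ℝ)
    (hsym : ∀ x y, δ x y = δ y x) (hdiag : ∀ x, δ x x = 0) :
    (∀ i j : X, i ≠ j → njZu δ i j = -njL δ - njQ δ i j) ∧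
    (∀ i j : X, i ≠ j →
      ((∀ p q : X, p ≠ q → njZu δ p q ≤ njZu δ i j) ↔
       (∀ p q : X, p ≠ q → njQ δ i j ≤ njQ δ p q))) := by
  set n := Fintype.card X with hndef
  -- binomial coefficient cast
  have hchoose : (((n - 1).choose 2 : ℕ) : ℝ) = ((n : ℝ) - 1) * ((n : ℝ) - 2) / 2 := by
    rw [Nat.cast_choose_two, Nat.cast_sub (by omega : 1 ≤ n)]
    push_cast
    ring
  have hCne : (((n - 1).choose 2 : ℕ) : ℝ) ≠ 0 := by
    rw [hchoose]
    have hn4 : (4 : ℝ) ≤ (n : ℝ) := by exact_mod_cast hn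
    apply ne_of_gt
    nlinarith
  have hn4 : (4 : ℝ) ≤ (n : ℝ) := by exact_mod_cast hn
  have key : ∀ i j : X, i ≠ j → njZu δ i j = -njL δ - njQ δ i j := by
    intro i j hij
    set S := (Finset.univ.erase i).erase j with hSdef
    have hjS : j ∉ S := Finset.notMem_erase _ _
    have hiS : i ∉ S := by
      intro h
      exact Finset.notMem_erase i Finset.univ (Finset.mem_of_mem_erase h)
    have hji : j ∈ Finset.univ.erase i := by
      simp [Finset.mem_erase, hij.symm]
    have hcardS : S.card = n - 2 := by
      rw [hSdef, Finset.card_erase_of_mem hji, Finset.card_erase_of_mem (Finset.mem_univ i)]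
      rfl
    have hcardSR : ((S.card : ℕ) : ℝ) = (n : ℝ) - 2 := by
      rw [hcardS, Nat.cast_sub (by omega)]
      norm_num
    set A := ∑ k ∈ S, δ i k with hA
    set B := ∑ k ∈ S, δ j k with hB
    set D := ∑ k ∈ S, ∑ l ∈ S, δ k l with hD
    -- inner sums
    have hinner : ∀ k ∈ S, ∑ l ∈ S.erase k, njw δ i j k l
        = ((n : ℝ) - 4) / 2 * (δ i k + δ j k) + ((A + B) / 2 - ((n : ℝ) - 3) * δ i j)
          - ∑ l ∈ S, δ k l := by
      intro k hk
      have hcard : (((S.erase k).card : ℕ) : ℝ) = (n : ℝ) - 3 := by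
        have h3 : (S.erase k).card = n - 3 := by
          rw [Finset.card_erase_of_mem hk, hcardS]
          omega
        rw [h3, Nat.cast_sub (by omega)]
        norm_num
      have step : ∑ l ∈ S.erase k, njw δ i j k l
          = ∑ l ∈ S.erase k, (((δ i k + δ j k) / 2 - δ i j) + (δ i l + δ j l) / 2 - δ k l) := by
        apply Finset.sum_congr rfl
        intro l _
        unfold njw
        ring
      rw [step, Finset.sum_sub_distrib, Finset.sum_add_distrib, Finset.sum_const,
        ← Finset.sum_div, Finset.sum_add_distrib, nsmul_eq_mul, hcard,
        Finset.sum_erase_eq_sub hk, Finset.sum_erase_eq_sub hk,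
        Finset.sum_erase_eq_sub hk, hdiag k]
      rw [← hA, ← hB]
      ring
    have houter : ∑ k ∈ S, ∑ l ∈ S.erase k, njw δ i j k l
        = ((n : ℝ) - 4) / 2 * (A + B)
          + ((n : ℝ) - 2) * ((A + B) / 2 - ((n : ℝ) - 3) * δ i j) - D := by
      rw [Finset.sum_congr rfl hinner, Finset.sum_sub_distrib, Finset.sum_add_distrib,
        Finset.sum_const, ← Finset.mul_sum, Finset.sum_add_distrib, nsmul_eq_mul, hcardSR,
        ← hA, ← hB, ← hD]
    -- decomposition of univ
    have hu1 : Finset.univ.erase i = insert j S := by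
      rw [hSdef, Finset.insert_erase hji]
    have hu2 : Finset.univ.erase j = insert i S := by
      have hc : (Finset.univ.erase j).erase i = S := by
        rw [hSdef, Finset.erase_right_comm]
      have hij' : i ∈ Finset.univ.erase j := by
        simp [Finset.mem_erase, hij]
      rw [← hc, Finset.insert_erase hij']
    have hu : (Finset.univ : Finset X) = insert i (insert j S) := by
      rw [← hu1, Finset.insert_erase (Finset.mem_univ i)]
    have hijS : i ∉ insert j S := by
      simp [Finset.mem_insert, hij, hiS]
    -- row sums
    have hrowi : ∑ k ∈ Finset.univ.erase i, δ i k = δ i j + A := by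
      rw [hu1, Finset.sum_insert hjS, hA]
    have hrowj : ∑ k ∈ Finset.univ.erase j, δ j k = δ i j + B := by
      rw [hu2, Finset.sum_insert hiS, hB, hsym j i]
    -- total sum
    have hT : ∑ x : X, ∑ y ∈ Finset.univ.erase x, δ x y = D + 2 * A + 2 * B + 2 * δ i j := by
      have hrow : ∀ x : X, ∑ y ∈ Finset.univ.erase x, δ x y = ∑ y : X, δ x y :=
        fun x => Finset.sum_erase _ (hdiag x)
      calc ∑ x : X, ∑ y ∈ Finset.univ.erase x, δ x y
          = ∑ x : X, (δ x i + δ x j + ∑ y ∈ S, δ x y) := by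
            apply Finset.sum_congr rfl
            intro x _
            rw [hrow x]
            conv_lhs => rw [hu]
            rw [Finset.sum_insert hijS, Finset.sum_insert hjS]
            ring
        _ = (∑ x : X, δ x i) + (∑ x : X, δ x j) + ∑ x : X, ∑ y ∈ S, δ x y := by
            rw [Finset.sum_add_distrib, Finset.sum_add_distrib]
        _ = D + 2 * A + 2 * B + 2 * δ i j := by
            have e1 : ∑ x : X, δ x i = δ i j + A := by
              conv_lhs => rw [hu]
              rw [Finset.sum_insert hijS, Finset.sum_insert hjS, hdiag i, hsym j i,
                Finset.sum_congr rfl (fun x _ => hsym x i), ← hA]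
              ring
            have e2 : ∑ x : X, δ x j = δ i j + B := by
              conv_lhs => rw [hu]
              rw [Finset.sum_insert hijS, Finset.sum_insert hjS, hdiag j,
                Finset.sum_congr rfl (fun x _ => hsym x j), ← hB]
              ring
            have e3 : ∑ x : X, ∑ y ∈ S, δ x y = A + B + D := by
              conv_lhs => rw [hu]
              rw [Finset.sum_insert hijS, Finset.sum_insert hjS, ← hA, ← hB, ← hD]
              ring
            rw [e1, e2, e3]
            ring
    -- put it together
    unfold njZu njL njQ
    rw [← hndef, ← hSdef, houter, hT, hrowi, hrowj]
    have hn2 : (n : ℝ) - 2 ≠ 0 := by linarith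
    have hn1 : (n : ℝ) - 1 ≠ 0 := by linarith
    rw [hchoose]
    field_simp
    ring
  refine ⟨key, ?_⟩
  intro i j hij
  constructor
  · intro h p q hpq
    have h1 := key i j hij
    have h2 := key p q hpq
    have := h p q hpq
    linarith
  · intro h p q hpq
    have h1 := key i j hij
    have h2 := key p q hpq
    have := h p q hpq
    linarith
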